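/- The set of points x ∈ Λ_{2m} with ‖x − u‖ ≤ √m / 2 equals B_int ∪ B_half; moreover every point of B_int ∪ B_half is at distance exactly √m / 2 from u, and B_int ∪ B_half has exactly 2^(m+1) elements. -/

import Mathlib

noncomputable def pt {n : ℕ} (S : Finset (Fin n)) (u : EuclideanSpace ℝ (Fin n))
    (ε : {i // i ∈ S} → Bool) : EuclideanSpace ℝ (Fin n) :=
  WithLp.toLp 2 (fun i => if h : i ∈ S then u i + (if ε ⟨i, h⟩ then 1/2 else -1/2) else u i)

lemma pt_inj {n : ℕ} (S : Finset (Fin n)) (u : EuclideanSpace ℝ (Fin n)) :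
    Function.Injective (pt S u) := by
  intro ε ε' h
  funext i
  have h2 := congrArg (fun v => v i.1) h
  simp only [pt, PiLp.toLp_apply, dif_pos i.2] at h2
  cases hb : ε ⟨i.1, i.2⟩ <;> cases hb' : ε' ⟨i.1, i.2⟩ <;>
    simp_all [Subtype.eta] <;> norm_num at h2

lemma pt_range {n : ℕ} (S : Finset (Fin n)) (u : EuclideanSpace ℝ (Fin n)) :
    Set.range (pt S u) = {x : EuclideanSpace ℝ (Fin n) |
      (∀ i ∉ S, x i = u i) ∧ (∀ i ∈ S, |x i - u i| = 1/2)} := by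
  classical
  ext x
  constructor
  · rintro ⟨ε, rfl⟩
    constructor
    · intro i hi; simp [pt, PiLp.toLp_apply, hi]
    · intro i hi
      simp only [pt, PiLp.toLp_apply, dif_pos hi]
      cases ε ⟨i, hi⟩ <;> norm_num
  · rintro ⟨h0, h1⟩
    refine ⟨fun j => decide (x j.1 = u j.1 + 1/2), PiLp.ext fun i => ?_⟩
    show (if h : i ∈ S then u i + (if decide (x i = u i + 1/2) then (1:ℝ)/2 else -1/2) else u i) = x i
    by_cases hi : i ∈ S
    · rw [dif_pos hi]
      rcases (abs_eq (by norm_num : (0:ℝ) ≤ 1/2)).1 (h1 i hi) with hx | hx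
      · have hxe : x i = u i + 1/2 := by linarith
        simp [hxe]
      · have hxe : x i = u i - 1/2 := by linarith
        have hne : ¬ (x i = u i + 1/2) := by rw [hxe]; intro hh; norm_num at hh; linarith
        rw [decide_eq_false hne]
        simp [hxe]
        ring
    · rw [dif_neg hi]; exact (h0 i hi).symm

lemma pt_card {n : ℕ} (S : Finset (Fin n)) (u : EuclideanSpace ℝ (Fin n)) :
    (Set.range (pt S u)).ncard = 2 ^ S.card := by
  rw [← Set.image_univ, Set.ncard_image_of_injective _ (pt_inj S u), Set.ncard_univ,
    Nat.card_eq_fintype_card, Fintype.card_fun, Fintype.card_coe, Fintype.card_bool]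

set_option maxHeartbeats 800000 in
/-- The points of the lattice `D_{2m}^*` at distance at most `√m / 2` from `u` are exactly
the `2^(m+1)` points `B_int ∪ B_half` (the vertices of the free sum of two `m`-cubes),
all of which lie at distance exactly `√m / 2` from `u`. -/
theorem stmt_2 (m : ℕ) (hm : 1 ≤ m)
    (Λ : Set (EuclideanSpace ℝ (Fin (2 * m))))
    (hΛ : Λ = {x : EuclideanSpace ℝ (Fin (2 * m)) |
      (∀ i, ∃ k : ℤ, x i = (k : ℝ)) ∨ (∀ i, ∃ k : ℤ, x i = (k : ℝ) + 1/2)})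
    (S : Finset (Fin (2 * m))) (hS : S.card = m)
    (u : EuclideanSpace ℝ (Fin (2 * m)))
    (huS : ∀ i ∈ S, ∃ k : ℤ, u i = (k : ℝ) + 1/2)
    (huI : ∀ i ∉ S, ∃ k : ℤ, u i = (k : ℝ))
    (Bhalf Bint : Set (EuclideanSpace ℝ (Fin (2 * m))))
    (hBhalf : Bhalf = {x : EuclideanSpace ℝ (Fin (2 * m)) |
      (∀ i ∈ S, x i = u i) ∧ (∀ i ∉ S, |x i - u i| = 1/2)})
    (hBint : Bint = {x : EuclideanSpace ℝ (Fin (2 * m)) |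
      (∀ i ∉ S, x i = u i) ∧ (∀ i ∈ S, |x i - u i| = 1/2)}) :
    {x ∈ Λ | ‖x - u‖ ≤ Real.sqrt m / 2} = Bint ∪ Bhalf ∧
    (∀ x ∈ Bint ∪ Bhalf, dist x u = Real.sqrt m / 2) ∧
    (Bint ∪ Bhalf).ncard = 2 ^ (m + 1) := by
  classical
  -- basic arithmetic helpers
  have habs_half : ∀ k : ℤ, (1/2 : ℝ) ≤ |(k : ℝ) + 1/2| := by
    intro k
    rcases Int.lt_or_le k 0 with h | h
    · have hk : (k : ℝ) ≤ -1 := by exact_mod_cast Int.le_sub_one_of_lt h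
      rw [abs_of_nonpos (by linarith)]; linarith
    · have hk : (0:ℝ) ≤ k := by exact_mod_cast h
      rw [abs_of_nonneg (by linarith)]; linarith
  have habs_eq : ∀ a : ℝ, a^2 = 1/4 → |a| = 1/2 := by
    intro a ha
    have h2 : (a - 1/2) * (a + 1/2) = 0 := by nlinarith
    rcases mul_eq_zero.1 h2 with h | h
    · rw [abs_of_nonneg (by linarith)]; linarith
    · rw [abs_of_nonpos (by linarith)]; linarith
  have hSc : Sᶜ.card = m := by
    rw [Finset.card_compl, Fintype.card_fin, hS]; omega
  -- norm formula
  have hnorm : ∀ x : EuclideanSpace ℝ (Fin (2*m)),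
      ‖x - u‖ = Real.sqrt (∑ i, (x i - u i)^2) := by
    intro x
    rw [EuclideanSpace.norm_eq]
    congr 1
    refine Finset.sum_congr rfl fun i _ => ?_
    simp [Real.norm_eq_abs, sq_abs]
  have hsqrt : Real.sqrt ((m:ℝ)/4) = Real.sqrt m / 2 := by
    rw [show ((m:ℝ)/4) = m * (1/2)^2 by ring,
      Real.sqrt_mul (by positivity), Real.sqrt_sq (by norm_num)]; ring
  -- sum value for members of the cubes
  have key_sum : ∀ (T : Finset (Fin (2*m))) (x : EuclideanSpace ℝ (Fin (2*m))),
      T.card = m → (∀ i ∉ T, x i = u i) → (∀ i ∈ T, |x i - u i| = 1/2) →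
      ∑ i, (x i - u i)^2 = m/4 := by
    intro T x hT h0 h1
    rw [← Finset.sum_add_sum_compl T]
    have e1 : ∑ i ∈ T, (x i - u i)^2 = ∑ _i ∈ T, (1/4 : ℝ) := by
      refine Finset.sum_congr rfl fun i hi => ?_
      have := h1 i hi
      nlinarith [sq_abs (x i - u i)]
    have e2 : ∑ i ∈ Tᶜ, (x i - u i)^2 = 0 := by
      refine Finset.sum_eq_zero fun i hi => ?_
      rw [h0 i (Finset.mem_compl.1 hi), sub_self]; ring
    rw [e1, e2, Finset.sum_const, hT, nsmul_eq_mul]; ring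
  -- converse: from lower bounds on T and total ≤ m/4
  have key_rev : ∀ (T : Finset (Fin (2*m))) (x : EuclideanSpace ℝ (Fin (2*m))),
      T.card = m → (∀ i ∈ T, (1/2:ℝ) ≤ |x i - u i|) →
      ∑ i, (x i - u i)^2 ≤ m/4 →
      (∀ i ∉ T, x i = u i) ∧ (∀ i ∈ T, |x i - u i| = 1/2) := by
    intro T x hT hlb hle
    have hnn : ∀ i, (0:ℝ) ≤ (x i - u i)^2 := fun i => sq_nonneg _
    have hTlb : ∀ i ∈ T, (1/4:ℝ) ≤ (x i - u i)^2 := by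
      intro i hi
      have := hlb i hi
      nlinarith [sq_abs (x i - u i), abs_nonneg (x i - u i)]
    have hsplit : ∑ i ∈ T, (x i - u i)^2 + ∑ i ∈ Tᶜ, (x i - u i)^2
        = ∑ i, (x i - u i)^2 := Finset.sum_add_sum_compl T _
    have hTsum : (m:ℝ)/4 ≤ ∑ i ∈ T, (x i - u i)^2 := by
      calc (m:ℝ)/4 = ∑ _i ∈ T, (1/4:ℝ) := by
            rw [Finset.sum_const, hT, nsmul_eq_mul]; ring
        _ ≤ _ := Finset.sum_le_sum hTlb
    have hcnn : (0:ℝ) ≤ ∑ i ∈ Tᶜ, (x i - u i)^2 :=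
      Finset.sum_nonneg fun i _ => hnn i
    have hc0 : ∑ i ∈ Tᶜ, (x i - u i)^2 = 0 := by linarith
    have hT4 : ∑ i ∈ T, (x i - u i)^2 = m/4 := by linarith
    constructor
    · intro i hi
      have h0 := (Finset.sum_eq_zero_iff_of_nonneg (fun j _ => hnn j)).1 hc0 i
        (Finset.mem_compl.2 hi)
      have := (pow_eq_zero_iff (two_ne_zero)).mp h0
      linarith [sub_eq_zero.1 this]
    · intro i hi
      have hz : ∑ j ∈ T, ((x j - u j)^2 - 1/4) = 0 := by
        rw [Finset.sum_sub_distrib, Finset.sum_const, hT, hT4, nsmul_eq_mul]; ring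
      have := (Finset.sum_eq_zero_iff_of_nonneg
        (fun j hj => by linarith [hTlb j hj])).1 hz i hi
      exact habs_eq _ (by linarith)
  -- members of the cubes lie in the lattice
  have hBint_lat : ∀ x ∈ Bint, (∀ i, ∃ k : ℤ, x i = (k:ℝ)) := by
    rw [hBint]; rintro x ⟨h0, h1⟩ i
    by_cases hi : i ∈ S
    · obtain ⟨k, hk⟩ := huS i hi
      rcases (abs_eq (by norm_num : (0:ℝ) ≤ 1/2)).1 (h1 i hi) with h | h
      · exact ⟨k + 1, by push_cast; linarith⟩
      · exact ⟨k, by push_cast; linarith⟩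
    · obtain ⟨k, hk⟩ := huI i hi
      exact ⟨k, by rw [h0 i hi]; exact hk⟩
  have hBhalf_lat : ∀ x ∈ Bhalf, (∀ i, ∃ k : ℤ, x i = (k:ℝ) + 1/2) := by
    rw [hBhalf]; rintro x ⟨h0, h1⟩ i
    by_cases hi : i ∈ S
    · obtain ⟨k, hk⟩ := huS i hi
      exact ⟨k, by rw [h0 i hi]; exact hk⟩
    · obtain ⟨k, hk⟩ := huI i hi
      rcases (abs_eq (by norm_num : (0:ℝ) ≤ 1/2)).1 (h1 i hi) with h | h
      · exact ⟨k, by push_cast; linarith⟩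
      · exact ⟨k - 1, by push_cast; linarith⟩
  -- exact distance
  have hdist : ∀ x ∈ Bint ∪ Bhalf, dist x u = Real.sqrt m / 2 := by
    intro x hx
    have hsum : ∑ i, (x i - u i)^2 = m/4 := by
      rcases hx with hx | hx
      · rw [hBint] at hx; exact key_sum S x hS hx.1 hx.2
      · rw [hBhalf] at hx
        exact key_sum Sᶜ x hSc (fun i hi => hx.1 i (by simpa using hi))
          (fun i hi => hx.2 i (Finset.mem_compl.1 hi))
    rw [dist_eq_norm, hnorm, hsum, hsqrt]
  refine ⟨?_, hdist, ?_⟩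
  · ext x
    simp only [Set.mem_setOf_eq, Set.mem_union, hΛ]
    constructor
    · rintro ⟨hx, hle⟩
      have hle' : ∑ i, (x i - u i)^2 ≤ (m:ℝ)/4 := by
        rw [hnorm, ← hsqrt] at hle
        exact (Real.sqrt_le_sqrt_iff (by positivity)).1 hle
      rcases hx with hint | hhalf
      · left; rw [hBint]
        refine key_rev S x hS ?_ hle'
        intro i hi
        obtain ⟨k, hk⟩ := hint i
        obtain ⟨k', hk'⟩ := huS i hi
        have he : x i - u i = ((k - k' - 1 : ℤ) : ℝ) + 1/2 := by
          push_cast; rw [hk, hk']; ring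
        rw [he]; exact habs_half _
      · right; rw [hBhalf]
        have hlb : ∀ i ∈ Sᶜ, (1/2:ℝ) ≤ |x i - u i| := by
          intro i hi
          have hi' : i ∉ S := Finset.mem_compl.1 hi
          obtain ⟨k, hk⟩ := hhalf i
          obtain ⟨k', hk'⟩ := huI i hi'
          have he : x i - u i = ((k - k' : ℤ) : ℝ) + 1/2 := by
            push_cast; rw [hk, hk']; ring
          rw [he]; exact habs_half _
        have h := key_rev Sᶜ x hSc hlb hle'
        exact ⟨fun i hi => h.1 i (by simp [hi]),
          fun i hi => h.2 i (Finset.mem_compl.2 hi)⟩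
    · intro hx
      refine ⟨?_, ?_⟩
      · rcases hx with hx | hx
        · exact Or.inl (hBint_lat x hx)
        · exact Or.inr (hBhalf_lat x hx)
      · have hd := hdist x ((Set.mem_union x _ _).2 hx)
        rw [dist_eq_norm] at hd
        exact le_of_eq hd
  · have hBi : Bint = Set.range (pt S u) := by rw [hBint, pt_range]
    have hBh : Bhalf = Set.range (pt Sᶜ u) := by
      rw [hBhalf, pt_range]
      ext x
      simp only [Set.mem_setOf_eq, Finset.mem_compl, not_not]
    obtain ⟨i0, hi0⟩ := Finset.card_pos.1 (by omega : 0 < S.card)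
    have hdisj : Disjoint Bint Bhalf := by
      rw [Set.disjoint_left]
      intro x hxi hxh
      rw [hBint] at hxi; rw [hBhalf] at hxh
      have h1 := hxi.2 i0 hi0
      rw [hxh.1 i0 hi0, sub_self, abs_zero] at h1
      norm_num at h1
    have hfi : Bint.Finite := hBi ▸ Set.finite_range _
    have hfh : Bhalf.Finite := hBh ▸ Set.finite_range _
    rw [Set.ncard_union_eq hdisj hfi hfh, hBi, hBh, pt_card, pt_card, hS, hSc,
      pow_succ]
    ring
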